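/- A prime trace extension lemma: if (Σ, dom) is connected and {s, t} is a coherent set of finite traces, then there exists a prime trace p with s ≤ p and t ≤ p. -/

import Mathlib

/-- The independence relation induced by a location function. -/
def indep {Sigma Proc : Type} (dom : Sigma → Set Proc) (a b : Sigma) : Prop :=
  dom a ∩ dom b = ∅

/-- One swap of two adjacent independent letters. -/
def SwapStep {Sigma : Type} (I : Sigma → Sigma → Prop) (w w' : List Sigma) : Prop :=
  ∃ u v a b, I a b ∧ w = u ++ a :: b :: v ∧ w' = u ++ b :: a :: v

/-- Mazurkiewicz trace equivalence `∼_I` on finite words. -/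
def TraceEq {Sigma : Type} (I : Sigma → Sigma → Prop) : List Sigma → List Sigma → Prop :=
  Relation.EqvGen (SwapStep I)

/-- `s` is a trace prefix of `u`: some extension of `s` is `∼_I`-equivalent
to `u` (i.e. `[s] ≤ [u]` as traces). -/
def TrPrefix {Sigma : Type} (I : Sigma → Sigma → Prop) (s u : List Sigma) : Prop :=
  ∃ v, TraceEq I (s ++ v) u

/-- The (finite) trace of `p` is prime: it is nonempty and has a unique
maximal element, i.e. all its linearizations end with the same letter
occurrence. -/
def IsPrime {Sigma : Type} (I : Sigma → Sigma → Prop) (p : List Sigma) : Prop :=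
  p ≠ [] ∧ ∀ v b w c, TraceEq I (v ++ [b]) p → TraceEq I (w ++ [c]) p →
    b = c ∧ TraceEq I v w

/-- The distributed alphabet `(Σ, dom)` is connected: `Σ` cannot be split
into two nonempty mutually independent parts (and `Σ` is nonempty). -/
def Connected {Sigma Proc : Type} (dom : Sigma → Set Proc) : Prop :=
  Nonempty Sigma ∧
    ¬ ∃ S₁ S₂ : Set Sigma, S₁.Nonempty ∧ S₂.Nonempty ∧ S₁ ∪ S₂ = Set.univ ∧
        Disjoint S₁ S₂ ∧ ∀ a ∈ S₁, ∀ b ∈ S₂, indep dom a b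

section Aux

variable {Sigma : Type} {I : Sigma → Sigma → Prop}

/-- Every occurrence that is not last has a strictly later dependent occurrence,
i.e. the last position is the unique maximal event of the trace. -/
def UMax (I : Sigma → Sigma → Prop) (q : List Sigma) : Prop :=
  ∀ x a y, q = x ++ a :: y → y ≠ [] → ∃ b ∈ y, ¬ I a b

lemma traceEq_length {q q' : List Sigma} (h : TraceEq I q q') : q.length = q'.length := by
  induction h with
  | rel x y hxy => obtain ⟨u, v, a, b, _, rfl, rfl⟩ := hxy; simp
  | refl x => rfl
  | symm x y _ ih => omega
  | trans x y z _ _ ih1 ih2 => omega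

lemma traceEq_append_right {q q' : List Sigma} (r : List Sigma) (h : TraceEq I q q') :
    TraceEq I (q ++ r) (q' ++ r) := by
  induction h with
  | rel x y hxy =>
    obtain ⟨u, v, a, b, hab, rfl, rfl⟩ := hxy
    exact Relation.EqvGen.rel _ _ ⟨u, v ++ r, a, b, hab, by simp, by simp⟩
  | refl x => exact Relation.EqvGen.refl _
  | symm x y _ ih => exact Relation.EqvGen.symm _ _ ih
  | trans x y z _ _ ih1 ih2 => exact Relation.EqvGen.trans _ _ _ ih1 ih2

lemma umax_swap {u v : List Sigma} {a b : Sigma} (hab : I a b)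
    (h : UMax I (u ++ a :: b :: v)) : UMax I (u ++ b :: a :: v) := by
  intro x c y hxy hyne
  have base : ∃ d ∈ a :: v, ¬ I b d := by
    cases v with
    | nil =>
      obtain ⟨d, hd, hnd⟩ := h u a [b] rfl (by simp)
      simp at hd; subst hd; exact (hnd hab).elim
    | cons e v' =>
      obtain ⟨d, hd, hnd⟩ := h (u ++ [a]) b (e :: v') (by simp) (by simp)
      exact ⟨d, List.mem_cons_of_mem _ hd, hnd⟩
  rcases List.append_eq_append_iff.mp hxy with ⟨m, hm1, hm2⟩ | ⟨m, hm1, hm2⟩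
  · cases m with
    | nil =>
      simp at hm2
      obtain ⟨rfl, rfl⟩ := hm2
      exact base
    | cons bb m' =>
      rw [List.cons_append] at hm2
      injection hm2 with h1 h2
      subst h1
      cases m' with
      | nil =>
        rw [List.nil_append] at h2
        injection h2 with h3 h4
        subst h3
        cases h4
        obtain ⟨d, hd, hnd⟩ := h u a (b :: v) rfl (by simp)
        rcases List.mem_cons.mp hd with rfl | hd
        · exact (hnd hab).elim
        · exact ⟨d, hd, hnd⟩
      | cons aa m'' =>
        rw [List.cons_append] at h2
        injection h2 with h3 h4
        subst h3
        exact h (u ++ a :: b :: m'') c y (by simp [h4]) hyne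
  · cases m with
    | nil =>
      simp at hm1 hm2
      obtain ⟨rfl, rfl⟩ := hm2
      exact base
    | cons f m' =>
      rw [List.cons_append] at hm2
      injection hm2 with h1 h2
      subst h1; subst h2
      obtain ⟨d, hd, hnd⟩ := h x c (m' ++ a :: b :: v) (by simp [hm1]) (by simp)
      refine ⟨d, ?_, hnd⟩
      simp only [List.mem_append, List.mem_cons] at hd ⊢
      tauto

lemma umax_traceEq (hI : ∀ a b, I a b → I b a) {q q' : List Sigma} (h : TraceEq I q q') :
    (UMax I q ↔ UMax I q') := by
  induction h with
  | rel x y hxy =>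
    obtain ⟨u, v, a, b, hab, rfl, rfl⟩ := hxy
    exact ⟨umax_swap hab, umax_swap (hI a b hab)⟩
  | refl x => exact Iff.rfl
  | symm x y _ ih => exact ih.symm
  | trans x y z _ _ ih1 ih2 => exact ih1.trans ih2

lemma last_cancel (hI : ∀ a b, I a b → I b a) {q q' : List Sigma} (h : TraceEq I q q') :
    UMax I q → ∀ v b w c, q = v ++ [b] → q' = w ++ [c] → b = c ∧ TraceEq I v w := by
  induction h with
  | rel q q' hxy =>
    intro hu v b w c hq hq'
    obtain ⟨u0, v0, a0, b0, hab, rfl, rfl⟩ := hxy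
    rcases List.eq_nil_or_concat v0 with rfl | ⟨v1, e, rfl⟩
    · exfalso
      obtain ⟨d, hd, hnd⟩ := hu u0 a0 [b0] rfl (by simp)
      simp at hd; subst hd; exact hnd hab
    · have hq2 : (u0 ++ a0 :: b0 :: v1) ++ [e] = v ++ [b] := by simpa using hq
      have hq2' : (u0 ++ b0 :: a0 :: v1) ++ [e] = w ++ [c] := by simpa using hq'
      obtain ⟨rfl, hb⟩ := List.append_inj' hq2 rfl
      obtain ⟨rfl, hc⟩ := List.append_inj' hq2' rfl
      have hb : e = b := by injection hb
      have hc : e = c := by injection hc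
      refine ⟨hb ▸ hc ▸ rfl, ?_⟩
      exact Relation.EqvGen.rel _ _ ⟨u0, v1, a0, b0, hab, rfl, rfl⟩
  | refl q =>
    intro hu v b w c hq hq'
    rw [hq] at hq'
    obtain ⟨rfl, hb⟩ := List.append_inj' hq' rfl
    have hb : b = c := by injection hb
    exact ⟨hb, Relation.EqvGen.refl _⟩
  | symm q q' h ih =>
    intro hu' v b w c hq' hq
    have hu : UMax I q := (umax_traceEq hI h).mpr hu'
    obtain ⟨hbc, hvw⟩ := ih hu w c v b hq hq'
    exact ⟨hbc.symm, Relation.EqvGen.symm _ _ hvw⟩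
  | trans q q'' q' h1 h2 ih1 ih2 =>
    intro hu v b w c hq hq'
    have hne : q'' ≠ [] := by
      have hl := traceEq_length h1
      rw [hq] at hl
      intro hnil
      rw [hnil] at hl
      simp at hl
    have hdec : q'' = q''.dropLast ++ [q''.getLast hne] :=
      (List.dropLast_append_getLast hne).symm
    obtain ⟨hb1, hvw1⟩ := ih1 hu v b _ _ hq hdec
    have hu'' : UMax I q'' := (umax_traceEq hI h1).mp hu
    obtain ⟨hb2, hvw2⟩ := ih2 hu'' _ _ w c hdec hq'
    exact ⟨hb1.trans hb2, Relation.EqvGen.trans _ _ _ hvw1 hvw2⟩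

end Aux

/-- if `(Σ, dom)` is connected and `{s, t}` is a coherent set
of finite traces (they have a common upper bound `u`), then there is a prime
trace `p` with `s ≤ p` and `t ≤ p`. -/
theorem coherent_pair_extends_to_prime {Sigma Proc : Type}
    (dom : Sigma → Set Proc) (hdom : ∀ a, (dom a).Nonempty)
    (hconn : Connected dom) (s t : List Sigma)
    (hcoh : ∃ u : List Sigma, TrPrefix (indep dom) s u ∧ TrPrefix (indep dom) t u) :
    ∃ p : List Sigma, IsPrime (indep dom) p ∧
      TrPrefix (indep dom) s p ∧ TrPrefix (indep dom) t p := by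
  obtain ⟨u, hs, ht⟩ := hcoh
  obtain ⟨a0⟩ := hconn.1
  have hI : ∀ a b : Sigma, indep dom a b → indep dom b a := by
    intro a b h
    unfold indep at h ⊢
    rwa [Set.inter_comm]
  have hrefl : ∀ a : Sigma, ¬ indep dom a a := by
    intro a h
    unfold indep at h
    rw [Set.inter_self] at h
    exact (hdom a).ne_empty h
  -- reachability in the dependence graph
  have hreach : ∀ a b : Sigma, Relation.ReflTransGen (fun x y => ¬ indep dom x y) a b := by
    intro a b
    by_contra hb
    apply hconn.2
    refine ⟨{x | Relation.ReflTransGen (fun x y => ¬ indep dom x y) a x},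
      {x | Relation.ReflTransGen (fun x y => ¬ indep dom x y) a x}ᶜ,
      ⟨a, Relation.ReflTransGen.refl⟩, ⟨b, hb⟩, Set.union_compl_self _,
      disjoint_compl_right, ?_⟩
    intro x hx y hy
    by_contra hxy
    exact hy (Relation.ReflTransGen.tail hx hxy)
  -- dependence path words
  have hpath : ∀ a b : Sigma, ∃ l : List Sigma, l ≠ [] ∧
      List.Chain' (fun x y => ¬ indep dom x y) l ∧ l.head? = some a ∧ l.getLast? = some b := by
    intro a b
    have h := hreach a b
    induction h with
    | refl => exact ⟨[a], by simp, List.isChain_singleton a, by simp, by simp⟩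
    | tail h1 hbc ih =>
      obtain ⟨l, hne, hch, hhd, hlast⟩ := ih
      rename_i bmid cend
      refine ⟨l ++ [cend], by simp, ?_, ?_, List.getLast?_concat⟩
      · refine List.isChain_append.mpr ?_
        refine ⟨hch, List.isChain_singleton _, ?_⟩
        intro p hp q hq
        simp [hlast] at hp
        simp at hq
        subst hp; subst hq
        exact hbc
      · obtain ⟨hd, tl, rfl⟩ := List.exists_cons_of_ne_nil hne
        simpa using hhd
  -- chain word covering a list of letters
  have hcover : ∀ xs : List Sigma, ∃ l : List Sigma, l ≠ [] ∧
      List.Chain' (fun x y => ¬ indep dom x y) l ∧ ∀ x ∈ xs, x ∈ l := by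
    intro xs
    induction xs with
    | nil => exact ⟨[a0], by simp, List.isChain_singleton a0, by simp⟩
    | cons x xs ih =>
      obtain ⟨l, hne, hch, hmem⟩ := ih
      obtain ⟨hd, tl, rfl⟩ := List.exists_cons_of_ne_nil hne
      obtain ⟨m, hmne, hmch, hmh, hml⟩ := hpath x hd
      refine ⟨m ++ hd :: tl, by simp, ?_, ?_⟩
      · refine List.isChain_append.mpr ?_
        refine ⟨hmch, hch, ?_⟩
        intro p hp q hq
        simp [hml] at hp
        simp at hq
        subst hp; subst hq
        exact hrefl hd
      · intro y hy
        rcases List.mem_cons.mp hy with rfl | hy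
        · have : y ∈ m := by
            obtain ⟨m0, m1, rfl⟩ := List.exists_cons_of_ne_nil hmne
            simp at hmh
            subst hmh
            exact List.mem_cons_self
          exact List.mem_append_left _ this
        · exact List.mem_append_right _ (hmem y hy)
  obtain ⟨l, hlne, hlch, hlcov⟩ := hcover u
  refine ⟨u ++ l, ⟨?_, ?_⟩, ?_, ?_⟩
  · -- nonempty
    simp [hlne]
  · -- primality
    have hum : UMax (indep dom) (u ++ l) := by
      intro x c y hxy hyne
      have chainCase : ∀ m : List Sigma, l = m ++ c :: y → ∃ b ∈ y, ¬ indep dom c b := by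
        intro m hm
        obtain ⟨e, y', rfl⟩ := List.exists_cons_of_ne_nil hyne
        have hch := hlch
        rw [hm] at hch
        have := (List.isChain_split.mp hch).2
        exact ⟨e, List.mem_cons_self, (List.isChain_cons_cons.mp this).1⟩
      rcases List.append_eq_append_iff.mp hxy with ⟨m, hm1, hm2⟩ | ⟨m, hm1, hm2⟩
      · exact chainCase m hm2
      · cases m with
        | nil =>
          simp at hm2
          exact chainCase [] hm2.symm
        | cons f m' =>
          obtain ⟨rfl, rfl⟩ : c = f ∧ y = m' ++ l := by
            injection hm2 with h1 h2; exact ⟨h1, h2⟩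
          have hcu : c ∈ u := by rw [hm1]; simp
          exact ⟨c, List.mem_append_right _ (hlcov c hcu), hrefl c⟩
    intro v b w c h1 h2
    have h12 : TraceEq (indep dom) (v ++ [b]) (w ++ [c]) :=
      Relation.EqvGen.trans _ _ _ h1 (Relation.EqvGen.symm _ _ h2)
    have huv : UMax (indep dom) (v ++ [b]) := (umax_traceEq hI h1).mpr hum
    exact last_cancel hI h12 huv v b w c rfl rfl
  · obtain ⟨vs, hvs⟩ := hs
    exact ⟨vs ++ l, by rw [← List.append_assoc]; exact traceEq_append_right l hvs⟩
  · obtain ⟨vt, hvt⟩ := ht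
    exact ⟨vt ++ l, by rw [← List.append_assoc]; exact traceEq_append_right l hvt⟩
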